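/- Let $U$, $A$ be $k$-algebras, $H = U \otimes A$ an algebra structure satisfying $(u \otimes a)(u' \otimes a') = uu' \otimes aa'$ whenever $a = 1$ or $u' = 1$, and suppose there is a subalgebra $U' \subseteq U$ such that (i) the restriction map $\mathrm{Alg}(U, k) \to \mathrm{Alg}(U', k)$ is injective, and (ii) $(u \otimes a) \cdot_\chi u' = \chi(a) uu'$ for all $u \in U$, $a \in A$, $\chi \in \mathrm{Alg}(A, k)$, $u' \in U'$. If $\rho, \rho' \in \mathrm{Alg}(U, k)$ and $\chi, \chi' \in \mathrm{Alg}(A, k)$ with $L(\rho, \chi) \cong L(\rho', \chi')$ as left $U$-modules, then $\rho = \rho'$. -/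
import Mathlib


open scoped TensorProduct

noncomputable section

variable {K U A H : Type*} [Field K] [Ring U] [Algebra K U] [Ring A] [Algebra K A]
  [Ring H] [Algebra K H]

/-- `(id ⊗ χ) : U ⊗ A → U`. -/
def idTensorChi (χ : A →ₐ[K] K) : U ⊗[K] A →ₗ[K] U :=
  (TensorProduct.rid K U).toLinearMap ∘ₗ TensorProduct.map LinearMap.id χ.toLinearMap

/-- The left action of `H` on `U_χ ≅ H ⊗_A k`:  `h ·_χ u' = (id ⊗ χ)(h · (u' ⊗ 1))`. -/
def actChi (φ : (U ⊗[K] A) ≃ₗ[K] H) (χ : A →ₐ[K] K) (h : H) (u : U) : U :=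
  idTensorChi χ (φ.symm (h * φ (u ⊗ₜ[K] (1 : A))))

/-- `I(ρ, χ)`: the sum of all `H`-submodules of `U_χ` contained in `ker ρ`. -/
def Isub (φ : (U ⊗[K] A) ≃ₗ[K] H) (ρ : U →ₐ[K] K) (χ : A →ₐ[K] K) :
    Submodule K U :=
  sSup {W : Submodule K U |
    (∀ (h : H) (w : U), w ∈ W → actChi φ χ h w ∈ W) ∧ W ≤ LinearMap.ker ρ.toLinearMap}

lemma actChi_add (φ : (U ⊗[K] A) ≃ₗ[K] H) (χ : A →ₐ[K] K) (h₁ h₂ : H) (u : U) :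
    actChi φ χ (h₁ + h₂) u = actChi φ χ h₁ u + actChi φ χ h₂ u := by
  simp [actChi, add_mul, map_add]

lemma actChi_mul_assoc (φ : (U ⊗[K] A) ≃ₗ[K] H)
    (hmul1 : ∀ (u u' : U) (a' : A),
      φ (u ⊗ₜ[K] (1 : A)) * φ (u' ⊗ₜ[K] a') = φ ((u * u') ⊗ₜ[K] a'))
    (χ : A →ₐ[K] K) (h : H) (x u' : U) :
    actChi φ χ h (x * u') = actChi φ χ (h * φ (x ⊗ₜ[K] (1 : A))) u' := by
  simp only [actChi]
  rw [← hmul1 x u' 1, ← mul_assoc]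

lemma actChi_mem (φ : (U ⊗[K] A) ≃ₗ[K] H) (χ : A →ₐ[K] K) (U' : Subalgebra K U)
    (hact : ∀ (χ : A →ₐ[K] K) (u : U) (a : A), ∀ u' ∈ U',
      actChi φ χ (φ (u ⊗ₜ[K] a)) u' = χ a • (u * u'))
    (u' : U) (hu' : u' ∈ U') (h : H) :
    actChi φ χ h u' ∈ LinearMap.range (LinearMap.mulRight K u') := by
  have key : ∀ z : U ⊗[K] A,
      actChi φ χ (φ z) u' ∈ LinearMap.range (LinearMap.mulRight K u') := by
    intro z
    induction z using TensorProduct.induction_on with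
    | zero => simp [actChi]
    | tmul u a =>
        rw [hact χ u a u' hu']
        exact ⟨χ a • u, by simp [smul_mul_assoc]⟩
    | add x y hx hy =>
        rw [map_add, actChi_add]
        exact add_mem hx hy
  simpa using key (φ.symm h)

lemma mul_mem_Isub (φ : (U ⊗[K] A) ≃ₗ[K] H)
    (hmul1 : ∀ (u u' : U) (a' : A),
      φ (u ⊗ₜ[K] (1 : A)) * φ (u' ⊗ₜ[K] a') = φ ((u * u') ⊗ₜ[K] a'))
    (U' : Subalgebra K U)
    (hact : ∀ (χ : A →ₐ[K] K) (u : U) (a : A), ∀ u' ∈ U',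
      actChi φ χ (φ (u ⊗ₜ[K] a)) u' = χ a • (u * u'))
    (ρ : U →ₐ[K] K) (χ : A →ₐ[K] K)
    (u' : U) (hu' : u' ∈ U') (hρ : ρ u' = 0) (x : U) :
    x * u' ∈ Isub φ ρ χ := by
  have hset : LinearMap.range (LinearMap.mulRight K u') ∈
      {W : Submodule K U |
        (∀ (h : H) (w : U), w ∈ W → actChi φ χ h w ∈ W) ∧
          W ≤ LinearMap.ker ρ.toLinearMap} := by
    constructor
    · rintro h w ⟨c, rfl⟩
      rw [LinearMap.mulRight_apply, actChi_mul_assoc φ hmul1]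
      exact actChi_mem φ χ U' hact u' hu' _
    · rintro w ⟨c, rfl⟩
      simp [LinearMap.mem_ker, hρ]
  exact le_sSup hset ⟨x, rfl⟩

/-- if `L(ρ, χ) ≅ L(ρ', χ')` as left `U`-modules then `ρ = ρ'`. -/
theorem stmt_15
    (φ : (U ⊗[K] A) ≃ₗ[K] H)
    (hone : φ ((1 : U) ⊗ₜ[K] (1 : A)) = 1)
    (hmul1 : ∀ (u u' : U) (a' : A),
      φ (u ⊗ₜ[K] (1 : A)) * φ (u' ⊗ₜ[K] a') = φ ((u * u') ⊗ₜ[K] a'))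
    (hmul2 : ∀ (u : U) (a a' : A),
      φ (u ⊗ₜ[K] a) * φ ((1 : U) ⊗ₜ[K] a') = φ (u ⊗ₜ[K] (a * a')))
    (U' : Subalgebra K U)
    (hres : ∀ ρ₁ ρ₂ : U →ₐ[K] K, (∀ x ∈ U', ρ₁ x = ρ₂ x) → ρ₁ = ρ₂)
    (hact : ∀ (χ : A →ₐ[K] K) (u : U) (a : A), ∀ u' ∈ U',
      actChi φ χ (φ (u ⊗ₜ[K] a)) u' = χ a • (u * u'))
    (ρ ρ' : U →ₐ[K] K) (χ χ' : A →ₐ[K] K)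
    (T : (U ⧸ Isub φ ρ χ) ≃ₗ[K] (U ⧸ Isub φ ρ' χ'))
    (hT : ∀ u x y : U, T ((Isub φ ρ χ).mkQ x) = (Isub φ ρ' χ').mkQ y →
      T ((Isub φ ρ χ).mkQ (u * x)) = (Isub φ ρ' χ').mkQ (u * y)) :
    ρ = ρ' := by
  have hIker : Isub φ ρ' χ' ≤ LinearMap.ker ρ'.toLinearMap := sSup_le fun W hW => hW.2
  set g : U →ₗ[K] K :=
    ((Isub φ ρ' χ').liftQ ρ'.toLinearMap hIker) ∘ₗ (T.toLinearMap ∘ₗ (Isub φ ρ χ).mkQ)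
    with hg
  have hgval : ∀ x y : U, T ((Isub φ ρ χ).mkQ x) = (Isub φ ρ' χ').mkQ y → g x = ρ' y := by
    intro x y hxy
    rw [hg]
    simp only [LinearMap.comp_apply, LinearEquiv.coe_coe, hxy, Submodule.liftQ_apply]
    rfl
  -- left multiplicativity of g
  have hg1 : ∀ u x : U, g (u * x) = ρ' u * g x := by
    intro u x
    obtain ⟨y, hy⟩ := (Isub φ ρ' χ').mkQ_surjective (T ((Isub φ ρ χ).mkQ x))
    rw [hgval x y hy.symm, hgval (u * x) (u * y) (hT u x y hy.symm), map_mul]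
  -- right U'-relation for g
  have hg2 : ∀ x : U, ∀ u' ∈ U', g (x * u') = ρ u' * g x := by
    intro x u' hu'
    have hz : x * u' - ρ u' • x ∈ Isub φ ρ χ := by
      have hrw : x * u' - ρ u' • x = x * (u' - ρ u' • (1 : U)) := by
        rw [mul_sub, mul_smul_comm, mul_one]
      rw [hrw]
      exact mul_mem_Isub φ hmul1 U' hact ρ χ _
        (sub_mem hu' (SMulMemClass.smul_mem _ (one_mem U'))) (by simp) x
    have h0 : g (x * u' - ρ u' • x) = 0 := by
      have hq : (Isub φ ρ χ).mkQ (x * u' - ρ u' • x) = 0 :=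
        (Submodule.Quotient.mk_eq_zero _).2 hz
      rw [hg]
      simp only [LinearMap.comp_apply, hq, map_zero]
    have := sub_eq_zero.mp (by simpa [map_sub, map_smul, smul_eq_mul] using h0)
    rw [this]
  -- g 1 ≠ 0
  have hg1ne : g 1 ≠ 0 := by
    intro h0
    have hzero : ∀ x : U, g x = 0 := by
      intro x
      have := hg1 x 1
      rw [mul_one] at this
      rw [this, h0, mul_zero]
    have : ρ' 1 = 0 := by
      obtain ⟨p, hp⟩ := T.surjective ((Isub φ ρ' χ').mkQ 1)
      obtain ⟨x, rfl⟩ := (Isub φ ρ χ).mkQ_surjective p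
      rw [← hgval x 1 hp]
      exact hzero x
    simp at this
  -- conclude
  apply hres
  intro u' hu'
  have e1 : g (1 * u') = ρ u' * g 1 := hg2 1 u' hu'
  have e2 : g (u' * 1) = ρ' u' * g 1 := hg1 u' 1
  rw [one_mul] at e1
  rw [mul_one] at e2
  exact mul_right_cancel₀ hg1ne (e1.symm.trans e2 : _)
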